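/- Let n ≥ 1 and let F_n = FreeGroup (Fin n) with generators X_1, …, X_n. For 1 ≤ i ≤ n let A_{0i} be the inner automorphism of F_n given by conjugation by X_i, and for 1 ≤ i < j ≤ n let A_{ij} be the group endomorphism of F_n determined on generators by: A_{ij}(X_i) = X_j^{−1} X_i X_j, A_{ij}(X_j) = (X_i X_j)^{−1} X_j (X_i X_j), A_{ij}(X_k) = X_k for k < i or k > j, and A_{ij}(X_k) = (X_j^{−1} X_i^{−1} X_j X_i) X_k (X_j^{−1} X_i^{−1} X_j X_i)^{−1} for i < k < j. Then: (i) each A_{ij} is an automorphism of F_n; (ii) for all 0 ≤ a < b < c ≤ n, the automorphism A_{ab} ∘ A_{ac} ∘ A_{bc} commutes with each of A_{ab}, A_{ac}, A_{bc} in Aut(F_n); and (iii) for all 0 ≤ a < b < c < d ≤ n, A_{ab} commutes with A_{cd} and A_{ad} commutes with A_{bc} in Aut(F_n). -/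

import Mathlib

open FreeGroup

private def pbF {n : ℕ} (i j : Fin n) : Fin n → FreeGroup (Fin n) := fun l =>
    if l = i then (of i * of j) * of i * (of i * of j)⁻¹
    else if l = j then (of i * of j) * of j * (of i * of j)⁻¹
    else if i < l ∧ l < j then
      ((of i * of j) * ((of j)⁻¹ * (of i)⁻¹ * of j * of i)⁻¹ * (of i * of j)⁻¹) * of l *
        ((of i * of j) * ((of j)⁻¹ * (of i)⁻¹ * of j * of i)⁻¹ * (of i * of j)⁻¹)⁻¹
    else of l

private def pbB {n : ℕ} (i j : Fin n) : Monoid.End (FreeGroup (Fin n)) :=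
  FreeGroup.lift (pbF i j)

private lemma pbB_of {n : ℕ} (i j l : Fin n) : pbB i j (of l) = pbF i j l :=
  FreeGroup.lift_apply_of

private lemma pbB_i {n : ℕ} (i j : Fin n) :
    pbB i j (of i) = (of i * of j) * of i * (of i * of j)⁻¹ := by
  rw [pbB_of]; simp [pbF]

private lemma pbB_j {n : ℕ} {i j : Fin n} (hij : i < j) :
    pbB i j (of j) = (of i * of j) * of j * (of i * of j)⁻¹ := by
  rw [pbB_of]; simp [pbF, hij.ne']

private lemma pbB_out {n : ℕ} {i j l : Fin n} (hij : i < j) (h : l < i ∨ j < l) :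
    pbB i j (of l) = of l := by
  have h1 : l ≠ i := by rcases h with h | h; exact h.ne; exact (hij.trans h).ne'
  have h2 : l ≠ j := by rcases h with h | h; exact (h.trans hij).ne; exact h.ne'
  have h3 : ¬ (i < l ∧ l < j) := by
    rintro ⟨u, v⟩; rcases h with h | h
    · exact absurd (h.trans u) (lt_irrefl l)
    · exact absurd (h.trans v) (lt_irrefl j)
  rw [pbB_of]; simp [pbF, h1, h2, h3]

private lemma pbB_mid {n : ℕ} {i j l : Fin n} (h1 : i < l) (h2 : l < j) :
    pbB i j (of l) =
      ((of i * of j) * ((of j)⁻¹ * (of i)⁻¹ * of j * of i)⁻¹ * (of i * of j)⁻¹) * of l *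
        ((of i * of j) * ((of j)⁻¹ * (of i)⁻¹ * of j * of i)⁻¹ * (of i * of j)⁻¹)⁻¹ := by
  rw [pbB_of]; simp [pbF, h1.ne', h2.ne, h1, h2]

set_option maxHeartbeats 4000000 in
/-- Section 1.4: the explicit formulas for the conjugation action
`Ad : PB_{n+1} → Aut(F_n)` define automorphisms of the free group `F_n`
satisfying the pure braid relations.  Strand indices `{0, …, n}` are modelled by
`Fin (n+1)`; the generator `X_i` (`1 ≤ i ≤ n`) is `FreeGroup.of i` with
`i : Fin n`, its strand index being `i.succ`.  `A_{0i}` is conjugation by `X_i`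
and `A_{ij}` (for `1 ≤ i < j ≤ n`) is given by the formulas of the paper.  Then
each `A_{ab}` is bijective, `A_{ab} A_{ac} A_{bc}` commutes with each of
`A_{ab}, A_{ac}, A_{bc}` for `a < b < c`, and `A_{ab}` commutes with `A_{cd}`
and `A_{ad}` with `A_{bc}` for `a < b < c < d` (products of endomorphisms being
composition). -/
theorem pure_braid_action_on_free_group (n : ℕ) (hn : 1 ≤ n)
    (A : Fin (n + 1) → Fin (n + 1) → Monoid.End (FreeGroup (Fin n)))
    (h0 : ∀ (i : Fin n) (g : FreeGroup (Fin n)),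
      A 0 i.succ g = of i * g * (of i)⁻¹)
    (hii : ∀ i j : Fin n, i < j →
      A i.succ j.succ (of i) = (of j)⁻¹ * of i * of j)
    (hjj : ∀ i j : Fin n, i < j →
      A i.succ j.succ (of j) = (of i * of j)⁻¹ * of j * (of i * of j))
    (hout : ∀ i j l : Fin n, i < j → (l < i ∨ j < l) →
      A i.succ j.succ (of l) = of l)
    (hmid : ∀ i j l : Fin n, i < j → i < l → l < j →
      A i.succ j.succ (of l) =
        ((of j)⁻¹ * (of i)⁻¹ * of j * of i) * of l *
          ((of j)⁻¹ * (of i)⁻¹ * of j * of i)⁻¹) :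
    (∀ a b : Fin (n + 1), a < b → Function.Bijective (A a b)) ∧
    (∀ a b c : Fin (n + 1), a < b → b < c →
      Commute (A a b * A a c * A b c) (A a b) ∧
      Commute (A a b * A a c * A b c) (A a c) ∧
      Commute (A a b * A a c * A b c) (A b c)) ∧
    (∀ a b c d : Fin (n + 1), a < b → b < c → c < d →
      Commute (A a b) (A c d) ∧ Commute (A a d) (A b c)) := by
  refine ⟨?_, ?_, ?_⟩
  · intro a b hab
    rcases Fin.eq_zero_or_eq_succ b with rfl | ⟨j, rfl⟩
    · exact absurd hab (Fin.not_lt_zero a)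
    rcases Fin.eq_zero_or_eq_succ a with rfl | ⟨i, rfl⟩
    · refine Function.bijective_iff_has_inverse.mpr
        ⟨fun g => (of j)⁻¹ * g * of j, fun g => ?_, fun g => ?_⟩
      · simp only [h0]; group
      · simp only [h0]; group
    · have hij : i < j := Fin.succ_lt_succ_iff.mp hab
      have eAi := hii i j hij
      have eAj := hjj i j hij
      have hBA : (pbB i j) * (A i.succ j.succ) = 1 := by
        refine FreeGroup.ext_hom _ _ fun l => ?_
        show pbB i j (A i.succ j.succ (of l)) = of l
        rcases lt_trichotomy l i with h | rfl | h
        · rw [hout i j l hij (Or.inl h), pbB_out hij (Or.inl h)]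
        · simp only [eAi, _root_.map_mul, _root_.map_inv, pbB_i, pbB_j hij] <;> group
        rcases lt_trichotomy l j with h' | rfl | h'
        · simp only [hmid i j l hij h h', _root_.map_mul, _root_.map_inv, pbB_i, pbB_j hij,
            pbB_mid h h'] <;> group
        · simp only [eAj, _root_.map_mul, _root_.map_inv, pbB_i, pbB_j hij] <;> group
        · rw [hout i j l hij (Or.inr h'), pbB_out hij (Or.inr h')]
      have hAB : (A i.succ j.succ) * (pbB i j) = 1 := by
        refine FreeGroup.ext_hom _ _ fun l => ?_
        show A i.succ j.succ (pbB i j (of l)) = of l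
        rcases lt_trichotomy l i with h | rfl | h
        · rw [pbB_out hij (Or.inl h), hout i j l hij (Or.inl h)]
        · simp only [pbB_i, _root_.map_mul, _root_.map_inv, eAi, eAj] <;> group
        rcases lt_trichotomy l j with h' | rfl | h'
        · simp only [pbB_mid h h', _root_.map_mul, _root_.map_inv, eAi, eAj,
            hmid i j l hij h h'] <;> group
        · simp only [pbB_j hij, _root_.map_mul, _root_.map_inv, eAi, eAj] <;> group
        · rw [pbB_out hij (Or.inr h'), hout i j l hij (Or.inr h')]
      exact Function.bijective_iff_has_inverse.mpr
        ⟨pbB i j, fun x => DFunLike.congr_fun hBA x, fun x => DFunLike.congr_fun hAB x⟩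
  · intro a b c hab hbc
    have mule : ∀ (f g : Monoid.End (FreeGroup (Fin n))) (x : FreeGroup (Fin n)),
        (f * g) x = f (g x) := fun _ _ _ => rfl
    rcases Fin.eq_zero_or_eq_succ c with rfl | ⟨k, rfl⟩
    · exact absurd hbc (Fin.not_lt_zero b)
    rcases Fin.eq_zero_or_eq_succ b with rfl | ⟨j, rfl⟩
    · exact absurd hab (Fin.not_lt_zero a)
    have hjk : j < k := Fin.succ_lt_succ_iff.mp hbc
    have ejj := hii j k hjk
    have ekk := hjj j k hjk
    rcases Fin.eq_zero_or_eq_succ a with rfl | ⟨i, rfl⟩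
    · refine ⟨?_, ?_, ?_⟩ <;>
      · refine FreeGroup.ext_hom _ _ fun l => ?_
        show (_ : Monoid.End (FreeGroup (Fin n))) (of l) = (_ : Monoid.End (FreeGroup (Fin n))) (of l)
        simp only [mule, _root_.map_mul, _root_.map_inv,
          h0, ejj, ekk] <;> group
    · have hij : i < j := Fin.succ_lt_succ_iff.mp hab
      have hik : i < k := hij.trans hjk
      have e1 := hii i j hij
      have e2 := hjj i j hij
      have e3 := hout i j k hij (Or.inr hjk)
      have e4 := hii i k hik
      have e5 := hmid i k j hik hij hjk
      have e6 := hjj i k hik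
      have e7 := hout j k i hjk (Or.inl hij)
      refine ⟨?_, ?_, ?_⟩ <;>
      · refine FreeGroup.ext_hom _ _ fun l => ?_
        show (_ : Monoid.End (FreeGroup (Fin n))) (of l) = (_ : Monoid.End (FreeGroup (Fin n))) (of l)
        rcases lt_trichotomy l i with h1 | rfl | h1
        · simp only [mule, _root_.map_mul, _root_.map_inv,
            e1, e2, e3, e4, e5, e6, e7, ejj, ekk,
            hout i j l hij (Or.inl h1), hout i k l hik (Or.inl h1),
            hout j k l hjk (Or.inl (h1.trans hij))] <;> group
        · simp only [mule, _root_.map_mul, _root_.map_inv,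
            e1, e2, e3, e4, e5, e6, e7, ejj, ekk] <;> group
        rcases lt_trichotomy l j with h2 | rfl | h2
        · simp only [mule, _root_.map_mul, _root_.map_inv,
            e1, e2, e3, e4, e5, e6, e7, ejj, ekk,
            hmid i j l hij h1 h2, hmid i k l hik h1 (h2.trans hjk),
            hout j k l hjk (Or.inl h2)] <;> group
        · simp only [mule, _root_.map_mul, _root_.map_inv,
            e1, e2, e3, e4, e5, e6, e7, ejj, ekk] <;> group
        rcases lt_trichotomy l k with h3 | rfl | h3
        · simp only [mule, _root_.map_mul, _root_.map_inv,
            e1, e2, e3, e4, e5, e6, e7, ejj, ekk,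
            hout i j l hij (Or.inr h2), hmid i k l hik h1 h3,
            hmid j k l hjk h2 h3] <;> group
        · simp only [mule, _root_.map_mul, _root_.map_inv,
            e1, e2, e3, e4, e5, e6, e7, ejj, ekk] <;> group
        · simp only [mule, _root_.map_mul, _root_.map_inv,
            e1, e2, e3, e4, e5, e6, e7, ejj, ekk,
            hout i j l hij (Or.inr (hjk.trans h3)), hout i k l hik (Or.inr h3),
            hout j k l hjk (Or.inr h3)] <;> group
  · intro a b c d hab hbc hcd
    have mule : ∀ (f g : Monoid.End (FreeGroup (Fin n))) (x : FreeGroup (Fin n)),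
        (f * g) x = f (g x) := fun _ _ _ => rfl
    rcases Fin.eq_zero_or_eq_succ d with rfl | ⟨m, rfl⟩
    · exact absurd hcd (Fin.not_lt_zero c)
    rcases Fin.eq_zero_or_eq_succ c with rfl | ⟨k, rfl⟩
    · exact absurd hbc (Fin.not_lt_zero b)
    have hkm : k < m := Fin.succ_lt_succ_iff.mp hcd
    rcases Fin.eq_zero_or_eq_succ b with rfl | ⟨j, rfl⟩
    · exact absurd hab (Fin.not_lt_zero a)
    have hjk : j < k := Fin.succ_lt_succ_iff.mp hbc
    have hjm : j < m := hjk.trans hkm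
    rcases Fin.eq_zero_or_eq_succ a with rfl | ⟨i, rfl⟩
    · constructor
      · refine FreeGroup.ext_hom _ _ fun l => ?_
        show (_ : Monoid.End (FreeGroup (Fin n))) (of l) = (_ : Monoid.End (FreeGroup (Fin n))) (of l)
        simp only [mule, _root_.map_mul, _root_.map_inv, h0,
          hout _ _ _ hkm (Or.inl hjk)] <;> group
      · refine FreeGroup.ext_hom _ _ fun l => ?_
        show (_ : Monoid.End (FreeGroup (Fin n))) (of l) = (_ : Monoid.End (FreeGroup (Fin n))) (of l)
        simp only [mule, _root_.map_mul, _root_.map_inv, h0,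
          hout _ _ _ hjk (Or.inr hkm)] <;> group
    · have hij : i < j := Fin.succ_lt_succ_iff.mp hab
      have hik : i < k := hij.trans hjk
      have him : i < m := hik.trans hkm
      constructor
      · -- Commute (A ij) (A km)
        have f1 := hout _ _ _ hij (Or.inr hjk)
        have f2 := hout _ _ _ hij (Or.inr hjm)
        have f3 := hout _ _ _ hkm (Or.inl hik)
        have f4 := hout _ _ _ hkm (Or.inl hjk)
        refine FreeGroup.ext_hom _ _ fun l => ?_
        show (_ : Monoid.End (FreeGroup (Fin n))) (of l) = (_ : Monoid.End (FreeGroup (Fin n))) (of l)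
        rcases lt_trichotomy l i with h1 | rfl | h1
        · simp only [mule, _root_.map_mul, _root_.map_inv, f1, f2, f3, f4,
            hout _ _ _ hij (Or.inl h1), hout _ _ _ hkm (Or.inl (h1.trans hik))] <;> group
        · simp only [mule, _root_.map_mul, _root_.map_inv, f1, f2, f3, f4,
            hii _ _ hij] <;> group
        rcases lt_trichotomy l j with h2 | rfl | h2
        · simp only [mule, _root_.map_mul, _root_.map_inv, f1, f2, f3, f4,
            hmid _ _ _ hij h1 h2, hout _ _ _ hkm (Or.inl (h2.trans hjk))] <;> group
        · simp only [mule, _root_.map_mul, _root_.map_inv, f1, f2, f3, f4,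
            hjj _ _ hij] <;> group
        rcases lt_trichotomy l k with h3 | rfl | h3
        · simp only [mule, _root_.map_mul, _root_.map_inv, f1, f2, f3, f4,
            hout _ _ _ hij (Or.inr h2), hout _ _ _ hkm (Or.inl h3)] <;> group
        · simp only [mule, _root_.map_mul, _root_.map_inv, f1, f2, f3, f4,
            hii _ _ hkm] <;> group
        rcases lt_trichotomy l m with h4 | rfl | h4
        · simp only [mule, _root_.map_mul, _root_.map_inv, f1, f2, f3, f4,
            hout _ _ _ hij (Or.inr (hjk.trans h3)), hmid _ _ _ hkm h3 h4] <;> group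
        · simp only [mule, _root_.map_mul, _root_.map_inv, f1, f2, f3, f4,
            hjj _ _ hkm] <;> group
        · simp only [mule, _root_.map_mul, _root_.map_inv, f1, f2, f3, f4,
            hout _ _ _ hij (Or.inr (hjm.trans h4)), hout _ _ _ hkm (Or.inr h4)] <;> group
      · -- Commute (A im) (A jk)
        have g1 := hmid _ _ _ him hij hjm
        have g2 := hmid _ _ _ him hik hkm
        have g3 := hout _ _ _ hjk (Or.inl hij)
        have g4 := hout _ _ _ hjk (Or.inr hkm)
        have g5 := hii _ _ him
        have g6 := hjj _ _ him
        have g7 := hii _ _ hjk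
        have g8 := hjj _ _ hjk
        refine FreeGroup.ext_hom _ _ fun l => ?_
        show (_ : Monoid.End (FreeGroup (Fin n))) (of l) = (_ : Monoid.End (FreeGroup (Fin n))) (of l)
        rcases lt_trichotomy l i with h1 | rfl | h1
        · simp only [mule, _root_.map_mul, _root_.map_inv, g1, g2, g3, g4, g5, g6, g7, g8,
            hout _ _ _ him (Or.inl h1), hout _ _ _ hjk (Or.inl (h1.trans hij))] <;> group
        · simp only [mule, _root_.map_mul, _root_.map_inv, g1, g2, g3, g4, g5, g6, g7, g8] <;> group
        rcases lt_trichotomy l j with h2 | rfl | h2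
        · simp only [mule, _root_.map_mul, _root_.map_inv, g1, g2, g3, g4, g5, g6, g7, g8,
            hmid _ _ _ him h1 (h2.trans hjm), hout _ _ _ hjk (Or.inl h2)] <;> group
        · simp only [mule, _root_.map_mul, _root_.map_inv, g1, g2, g3, g4, g5, g6, g7, g8] <;> group
        rcases lt_trichotomy l k with h3 | rfl | h3
        · simp only [mule, _root_.map_mul, _root_.map_inv, g1, g2, g3, g4, g5, g6, g7, g8,
            hmid _ _ _ him h1 (h3.trans hkm), hmid _ _ _ hjk h2 h3] <;> group
        · simp only [mule, _root_.map_mul, _root_.map_inv, g1, g2, g3, g4, g5, g6, g7, g8] <;> group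
        rcases lt_trichotomy l m with h4 | rfl | h4
        · simp only [mule, _root_.map_mul, _root_.map_inv, g1, g2, g3, g4, g5, g6, g7, g8,
            hmid _ _ _ him h1 h4, hout _ _ _ hjk (Or.inr h3)] <;> group
        · simp only [mule, _root_.map_mul, _root_.map_inv, g1, g2, g3, g4, g5, g6, g7, g8] <;> group
        · simp only [mule, _root_.map_mul, _root_.map_inv, g1, g2, g3, g4, g5, g6, g7, g8,
            hout _ _ _ him (Or.inr h4), hout _ _ _ hjk (Or.inr (hkm.trans h4))] <;> group
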